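/- Fix integers d, u, v, let γ be an integer and let c be a positive integer with gcd(c, 2γ) = 1. Then |S_c(γ)| ≤ c^{3/2} · gcd(v, c). -/

import Mathlib

/-- `e_c(z) = exp(2πiz/c)`, well defined on residue classes mod `c`. -/
noncomputable def ec (c : ℕ) (z : ZMod c) : ℂ :=
  Complex.exp (2 * Real.pi * Complex.I * (z.val : ℂ) / (c : ℂ))

/-- The Kloosterman sum `S(n,m;c) = ∑_{x ∈ (ℤ/cℤ)ˣ} e_c(nx + m x⁻¹)`. -/
noncomputable def Kloos (c : ℕ) [NeZero c] (n m : ZMod c) : ℂ :=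
  ∑ x : (ZMod c)ˣ, ec c (n * (x : ZMod c) + m * ((x⁻¹ : (ZMod c)ˣ) : ZMod c))

/-- The twisted sum
`S_c(γ) = ∑_{a,b (c)} S(a(γa+d), b(γb+d); c) · e_c(2γab + (d+u)a + (d+v)b)`. -/
noncomputable def Sc (c : ℕ) [NeZero c] (d u v : ℤ) (γ : ℤ) : ℂ :=
  ∑ a : ZMod c, ∑ b : ZMod c,
    Kloos c (a * (γ * a + d)) (b * (γ * b + d)) *
      ec c (2 * γ * a * b + (d + u) * a + (d + v) * b)

open Complex Finset

section helpers

variable {c : ℕ} [NeZero c]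

lemma ec_eq_std (z : ZMod c) : ec c z = ZMod.stdAddChar z := by
  rw [ZMod.stdAddChar_apply, ZMod.toCircle_apply]
  rfl

lemma std_norm (z : ZMod c) : ‖(ZMod.stdAddChar z : ℂ)‖ = 1 := by
  rw [ZMod.stdAddChar_apply]
  exact Circle.norm_coe _

lemma std_ne_zero (z : ZMod c) : (ZMod.stdAddChar z : ℂ) ≠ 0 := by
  intro h
  have := std_norm z
  rw [h] at this
  simp at this

lemma std_mul (z w : ZMod c) :
    (ZMod.stdAddChar (z + w) : ℂ) = ZMod.stdAddChar z * ZMod.stdAddChar w :=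
  AddChar.map_add_eq_mul _ _ _

lemma std_conj (z : ZMod c) :
    (starRingEnd ℂ) (ZMod.stdAddChar z) = ZMod.stdAddChar (-z) := by
  have h1 : (ZMod.stdAddChar (-z) : ℂ) * ZMod.stdAddChar z = 1 := by
    rw [← std_mul]; simp
  have h2 : (starRingEnd ℂ) (ZMod.stdAddChar z) * ZMod.stdAddChar z = 1 := by
    rw [mul_comm, Complex.mul_conj]
    norm_cast
    have := std_norm z
    rw [← Complex.sq_norm]
    rw [this]; norm_num
  exact mul_right_cancel₀ (std_ne_zero z) (h2.trans h1.symm)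

lemma std_sum (t : ZMod c) :
    ∑ b : ZMod c, (ZMod.stdAddChar (t * b) : ℂ) = if t = 0 then (c : ℂ) else 0 := by
  classical
  have := AddChar.sum_mulShift (ψ := (ZMod.stdAddChar : AddChar (ZMod c) ℂ)) t
    (ZMod.isPrimitive_stdAddChar c)
  simpa [ZMod.card, mul_comm] using this

/-- Norm of the complete quadratic Gauss sum. -/
lemma gauss_norm (t s : ZMod c) (ht : IsUnit (2 * t)) :
    ‖∑ a : ZMod c, (ZMod.stdAddChar (t * a ^ 2 + s * a) : ℂ)‖ = Real.sqrt c := by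
  classical
  set G := ∑ a : ZMod c, (ZMod.stdAddChar (t * a ^ 2 + s * a) : ℂ) with hG
  have key : G * (starRingEnd ℂ) G = (c : ℂ) := by
    rw [hG, map_sum, Finset.sum_mul_sum]
    have step1 : ∀ a' : ZMod c,
        ∑ a : ZMod c, (ZMod.stdAddChar (t * a ^ 2 + s * a) : ℂ) *
          (starRingEnd ℂ) (ZMod.stdAddChar (t * a' ^ 2 + s * a')) =
        ∑ h : ZMod c, (ZMod.stdAddChar (t * h ^ 2 + s * h) : ℂ) *
          ZMod.stdAddChar ((2 * t * h) * a') := by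
      intro a'
      refine (Fintype.sum_equiv (Equiv.addRight a') _ _ fun hh => ?_).symm
      rw [std_conj, ← std_mul, ← std_mul]
      congr 1
      simp only [Equiv.coe_addRight]
      ring
    calc ∑ a : ZMod c, ∑ a' : ZMod c,
          (ZMod.stdAddChar (t * a ^ 2 + s * a) : ℂ) *
            (starRingEnd ℂ) (ZMod.stdAddChar (t * a' ^ 2 + s * a')) =
        ∑ a' : ZMod c, ∑ h : ZMod c, (ZMod.stdAddChar (t * h ^ 2 + s * h) : ℂ) *
          ZMod.stdAddChar ((2 * t * h) * a') := by
          rw [Finset.sum_comm]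
          exact Finset.sum_congr rfl fun a' _ => step1 a'
      _ = ∑ h : ZMod c, (ZMod.stdAddChar (t * h ^ 2 + s * h) : ℂ) *
          ∑ a' : ZMod c, (ZMod.stdAddChar ((2 * t * h) * a') : ℂ) := by
          rw [Finset.sum_comm]
          exact Finset.sum_congr rfl fun h _ => (Finset.mul_sum _ _ _).symm
      _ = (c : ℂ) := by
          rw [Finset.sum_eq_single 0]
          · simp [std_sum]
          · intro h _ hh
            rw [std_sum]
            have hne : 2 * t * h ≠ 0 := by
              intro hz
              obtain ⟨z, hz2⟩ := ht.exists_left_inv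
              apply hh
              have : h = z * (2 * t * h) := by rw [← mul_assoc, hz2, one_mul]
              rw [hz, mul_zero] at this
              exact this
            simp [hne]
          · simp
  have hnorm : (Complex.normSq G : ℂ) = (c : ℂ) := by
    rw [← Complex.mul_conj]; exact key
  have hnsq : Complex.normSq G = (c : ℝ) := by
    exact_mod_cast hnorm
  rw [Complex.norm_def, hnsq]

lemma card_ker_le (v : ℤ) :
    (Finset.univ.filter (fun z : ZMod c => (v : ZMod c) * z = 0)).card ≤ Int.gcd v (c : ℤ) := by
  classical
  set g : ℕ := Int.gcd v (c : ℤ) with hg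
  have hc : 0 < c := NeZero.pos c
  have hgeq : g = Nat.gcd v.natAbs c := by simp [hg, Int.gcd]
  have hgc : g ∣ c := hgeq ▸ Nat.gcd_dvd_right _ _
  have hgpos : 0 < g := hgeq ▸ Nat.gcd_pos_of_pos_right _ hc
  have hcg : 0 < c / g := Nat.div_pos (Nat.le_of_dvd hc hgc) hgpos
  have hdvd : ∀ z : ZMod c, (v : ZMod c) * z = 0 → (c / g) ∣ z.val := by
    intro z hz
    have h1 : ((v * (z.val : ℤ) : ℤ) : ZMod c) = 0 := by
      push_cast
      rw [ZMod.natCast_zmod_val]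
      exact hz
    have h2 : (c : ℤ) ∣ v * (z.val : ℤ) := (ZMod.intCast_zmod_eq_zero_iff_dvd _ _).mp h1
    have h3 : c ∣ v.natAbs * z.val := by
      have h4 := Int.natAbs_dvd_natAbs.mpr h2
      rwa [Int.natAbs_mul, Int.natAbs_natCast, Int.natAbs_natCast] at h4
    have h4 : (c / g) ∣ (v.natAbs / g) * z.val := by
      rcases h3 with ⟨k, hk⟩
      refine ⟨k, ?_⟩
      have hgv : g ∣ v.natAbs := hgeq ▸ Nat.gcd_dvd_left _ _
      apply Nat.eq_of_mul_eq_mul_left hgpos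
      calc g * ((v.natAbs / g) * z.val) = (g * (v.natAbs / g)) * z.val := by ring
        _ = v.natAbs * z.val := by rw [Nat.mul_div_cancel' hgv]
        _ = c * k := hk
        _ = (g * (c / g)) * k := by rw [Nat.mul_div_cancel' hgc]
        _ = g * ((c / g) * k) := by ring
    have hcop : Nat.Coprime (c / g) (v.natAbs / g) :=
      (Nat.coprime_div_gcd_div_gcd (hgeq ▸ hgpos)).symm
    exact hcop.dvd_of_dvd_mul_left h4
  calc (Finset.univ.filter (fun z : ZMod c => (v : ZMod c) * z = 0)).card
      ≤ (Finset.range g).card := by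
        apply Finset.card_le_card_of_injOn (fun z => z.val / (c / g))
        · intro z hz
          simp only [Finset.mem_coe, Finset.mem_filter, Finset.mem_univ, true_and] at hz
          simp only [Finset.mem_coe, Finset.mem_range]
          rw [Nat.div_lt_iff_lt_mul hcg]
          calc z.val < c := z.val_lt
            _ ≤ g * (c / g) := by rw [Nat.mul_div_cancel' hgc]
        · intro z1 h1 z2 h2 he
          simp only [Finset.mem_coe, Finset.mem_filter, Finset.mem_univ, true_and] at h1 h2
          obtain ⟨k1, hk1⟩ := hdvd z1 h1
          obtain ⟨k2, hk2⟩ := hdvd z2 h2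
          apply ZMod.val_injective
          simp only [hk1, hk2, Nat.mul_div_cancel_left _ hcg] at he
          rw [hk1, hk2, he]
    _ = g := Finset.card_range g

lemma card_sol_le (v : ℤ) (u : ZMod c) :
    (Finset.univ.filter (fun z : ZMod c => (v : ZMod c) * z = u)).card ≤ Int.gcd v (c : ℤ) := by
  classical
  rcases (Finset.univ.filter (fun z : ZMod c => (v : ZMod c) * z = u)).eq_empty_or_nonempty with
    he | ⟨z0, hz0⟩
  · simp [he]
  · simp only [Finset.mem_filter, Finset.mem_univ, true_and] at hz0
    refine le_trans ?_ (card_ker_le (c := c) v)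
    apply Finset.card_le_card_of_injOn (fun z => z - z0)
    · intro z hz
      simp only [Finset.mem_coe, Finset.mem_filter, Finset.mem_univ, true_and] at *
      rw [mul_sub, hz, hz0, sub_self]
    · intro z1 _ z2 _ he
      exact sub_left_injective he

lemma card_units_sol_le (v : ℤ) (u : ZMod c) :
    (Finset.univ.filter (fun x : (ZMod c)ˣ => (v : ZMod c) * x = u)).card ≤
      Int.gcd v (c : ℤ) := by
  classical
  refine le_trans ?_ (card_sol_le v u)
  refine Finset.card_le_card_of_injOn (fun x : (ZMod c)ˣ => (x : ZMod c)) ?_ ?_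
  · intro x hx
    simp only [Finset.mem_coe, Finset.mem_filter, Finset.mem_univ, true_and] at *
    exact hx
  · intro x1 _ x2 _ he
    exact Units.ext he

end helpers

/-- For `gcd(c, 2γ) = 1`, `|S_c(γ)| ≤ c^{3/2} · gcd(v, c)`. -/
theorem stmt_11 (d u v γ : ℤ) (c : ℕ) [NeZero c] (h : Int.gcd (c : ℤ) (2 * γ) = 1) :
    ‖Sc c d u v γ‖ ≤ (c : ℝ) ^ ((3 : ℝ) / 2) * (Int.gcd v (c : ℤ) : ℝ) := by
  classical
  have hc : 0 < c := NeZero.pos c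
  have hcR : (0 : ℝ) < c := by exact_mod_cast hc
  -- units from the coprimality assumption
  have hcop : IsCoprime (c : ℤ) (2 * γ) := Int.isCoprime_iff_gcd_eq_one.mpr h
  have unit_of : ∀ m : ℤ, IsCoprime (c : ℤ) m → IsUnit ((m : ZMod c)) := by
    intro m hm
    have h1 := hm.map (Int.castRingHom (ZMod c))
    rw [eq_intCast, eq_intCast] at h1
    rw [show (((c : ℕ) : ℤ) : ZMod c) = 0 by
      rw [Int.cast_natCast, ZMod.natCast_self]] at h1
    exact isCoprime_zero_left.mp h1
  have h2u : IsUnit ((2 : ℤ) : ZMod c) := unit_of 2 hcop.of_mul_right_left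
  have hγu : IsUnit ((γ : ℤ) : ZMod c) := unit_of γ hcop.of_mul_right_right
  -- abbreviations
  set ψ : ZMod c → ℂ := fun z => (ZMod.stdAddChar z : ℂ) with hψdef
  -- Step 1: expand Sc as a triple sum of characters
  have e1 : Sc c d u v γ = ∑ a : ZMod c, ∑ b : ZMod c, ∑ x : (ZMod c)ˣ,
      ψ (a * (γ * a + d) * (x : ZMod c) + b * (γ * b + d) * ((x⁻¹ : (ZMod c)ˣ) : ZMod c)
        + (2 * γ * a * b + (d + u) * a + (d + v) * b)) := by
    rw [Sc]
    refine Finset.sum_congr rfl fun a _ => Finset.sum_congr rfl fun b _ => ?_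
    rw [Kloos, Finset.sum_mul]
    refine Finset.sum_congr rfl fun x _ => ?_
    rw [ec_eq_std, ec_eq_std]
    show (ZMod.stdAddChar _ : ℂ) * ZMod.stdAddChar _ = ψ _
    rw [hψdef, ← std_mul]
  -- Step 2: for each unit x, evaluate the double sum over a, b
  have step_x : ∀ x : (ZMod c)ˣ,
      (∑ b : ZMod c, ∑ a : ZMod c,
        ψ (a * (γ * a + d) * (x : ZMod c) + b * (γ * b + d) * ((x⁻¹ : (ZMod c)ˣ) : ZMod c)
          + (2 * γ * a * b + (d + u) * a + (d + v) * b))) =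
      (∑ a : ZMod c, ψ ((γ * x) * a ^ 2 + (d * x + d + u) * a)) *
        (if (v : ZMod c) - u * ((x⁻¹ : (ZMod c)ˣ) : ZMod c) = 0 then (c : ℂ) else 0) := by
    intro x
    set y : ZMod c := ((x⁻¹ : (ZMod c)ˣ) : ZMod c) with hy
    have hxy : (x : ZMod c) * y = 1 := by
      rw [hy, ← Units.val_mul, mul_inv_cancel, Units.val_one]
    calc (∑ b : ZMod c, ∑ a : ZMod c,
          ψ (a * (γ * a + d) * (x : ZMod c) + b * (γ * b + d) * y
            + (2 * γ * a * b + (d + u) * a + (d + v) * b)))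
        = ∑ b : ZMod c, ∑ a : ZMod c,
            ψ (((γ * x) * a ^ 2 + (d * x + d + u) * a) + ((v - u * y) * b)) := by
          refine Finset.sum_congr rfl fun b _ => ?_
          refine (Fintype.sum_equiv (Equiv.subRight (y * b)) _ _ fun a => ?_).symm
          simp only [Equiv.subRight_apply]
          congr 1
          linear_combination (2 * (γ:ZMod c) * a * b + (d:ZMod c) * b
            - (γ:ZMod c) * y * b ^ 2) * hxy
      _ = ∑ b : ZMod c,
            (∑ a : ZMod c, ψ ((γ * x) * a ^ 2 + (d * x + d + u) * a)) *
              ψ ((v - u * y) * b) := by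
          refine Finset.sum_congr rfl fun b _ => ?_
          rw [Finset.sum_mul]
          refine Finset.sum_congr rfl fun a _ => ?_
          exact std_mul _ _
      _ = (∑ a : ZMod c, ψ ((γ * x) * a ^ 2 + (d * x + d + u) * a)) *
            (if (v : ZMod c) - u * y = 0 then (c : ℂ) else 0) := by
          rw [← Finset.mul_sum]
          congr 1
          exact std_sum ((v : ZMod c) - (u : ZMod c) * y)
  -- Step 3: closed form for Sc
  have e2 : Sc c d u v γ = ∑ x : (ZMod c)ˣ,
      (∑ a : ZMod c, ψ ((γ * x) * a ^ 2 + (d * x + d + u) * a)) *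
        (if (v : ZMod c) - u * ((x⁻¹ : (ZMod c)ˣ) : ZMod c) = 0 then (c : ℂ) else 0) := by
    rw [e1]
    calc (∑ a : ZMod c, ∑ b : ZMod c, ∑ x : (ZMod c)ˣ,
          ψ (a * (γ * a + d) * (x : ZMod c) + b * (γ * b + d) * ((x⁻¹ : (ZMod c)ˣ) : ZMod c)
            + (2 * γ * a * b + (d + u) * a + (d + v) * b)))
        = ∑ a : ZMod c, ∑ x : (ZMod c)ˣ, ∑ b : ZMod c,
          ψ (a * (γ * a + d) * (x : ZMod c) + b * (γ * b + d) * ((x⁻¹ : (ZMod c)ˣ) : ZMod c)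
            + (2 * γ * a * b + (d + u) * a + (d + v) * b)) :=
          Finset.sum_congr rfl fun a _ => Finset.sum_comm
      _ = ∑ x : (ZMod c)ˣ, ∑ a : ZMod c, ∑ b : ZMod c,
          ψ (a * (γ * a + d) * (x : ZMod c) + b * (γ * b + d) * ((x⁻¹ : (ZMod c)ˣ) : ZMod c)
            + (2 * γ * a * b + (d + u) * a + (d + v) * b)) := Finset.sum_comm
      _ = ∑ x : (ZMod c)ˣ, ∑ b : ZMod c, ∑ a : ZMod c,
          ψ (a * (γ * a + d) * (x : ZMod c) + b * (γ * b + d) * ((x⁻¹ : (ZMod c)ˣ) : ZMod c)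
            + (2 * γ * a * b + (d + u) * a + (d + v) * b)) :=
          Finset.sum_congr rfl fun x _ => Finset.sum_comm
      _ = _ := Finset.sum_congr rfl fun x _ => step_x x
  -- Step 4: bound the norm
  have hGnorm : ∀ x : (ZMod c)ˣ,
      ‖∑ a : ZMod c, ψ ((γ * x) * a ^ 2 + (d * x + d + u) * a)‖ = Real.sqrt c := by
    intro x
    have ht : IsUnit (2 * ((γ : ZMod c) * (x : ZMod c))) := by
      have := h2u.mul (hγu.mul x.isUnit)
      simpa [mul_assoc] using this
    exact gauss_norm ((γ : ZMod c) * (x : ZMod c)) ((d : ZMod c) * (x : ZMod c) + (d : ZMod c) + (u : ZMod c)) ht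
  have hiff : ∀ x : (ZMod c)ˣ,
      ((v : ZMod c) - u * ((x⁻¹ : (ZMod c)ˣ) : ZMod c) = 0) ↔ ((v : ZMod c) * x = u) := by
    intro x
    have hxy : (x : ZMod c) * ((x⁻¹ : (ZMod c)ˣ) : ZMod c) = 1 := by
      rw [← Units.val_mul, mul_inv_cancel, Units.val_one]
    have hyx : ((x⁻¹ : (ZMod c)ˣ) : ZMod c) * (x : ZMod c) = 1 := by
      rw [← Units.val_mul, inv_mul_cancel, Units.val_one]
    constructor
    · intro hz
      rw [sub_eq_zero] at hz
      rw [hz, mul_assoc, hyx, mul_one]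
    · intro hz
      rw [sub_eq_zero, ← hz, mul_assoc, hxy, mul_one]
  have key : ‖Sc c d u v γ‖ ≤ Real.sqrt c * ((c : ℝ) *
      ((Finset.univ.filter (fun x : (ZMod c)ˣ => (v : ZMod c) * x = (u : ZMod c))).card)) := by
    rw [e2]
    calc ‖∑ x : (ZMod c)ˣ,
          (∑ a : ZMod c, ψ ((γ * x) * a ^ 2 + (d * x + d + u) * a)) *
            (if (v : ZMod c) - u * ((x⁻¹ : (ZMod c)ˣ) : ZMod c) = 0 then (c : ℂ) else 0)‖
        ≤ ∑ x : (ZMod c)ˣ,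
            ‖(∑ a : ZMod c, ψ ((γ * x) * a ^ 2 + (d * x + d + u) * a)) *
              (if (v : ZMod c) - u * ((x⁻¹ : (ZMod c)ˣ) : ZMod c) = 0 then (c : ℂ) else 0)‖ :=
          norm_sum_le _ _
      _ = ∑ x : (ZMod c)ˣ, Real.sqrt c *
            (if (v : ZMod c) * x = (u : ZMod c) then (c : ℝ) else 0) := by
          refine Finset.sum_congr rfl fun x _ => ?_
          rw [norm_mul, hGnorm x]
          congr 1
          rw [if_congr (hiff x) rfl rfl]
          split_ifs
          · simp
          · simp
      _ = Real.sqrt c * ∑ x : (ZMod c)ˣ,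
            (if (v : ZMod c) * x = (u : ZMod c) then (c : ℝ) else 0) := by
          rw [Finset.mul_sum]
      _ = Real.sqrt c * ((c : ℝ) *
            ((Finset.univ.filter (fun x : (ZMod c)ˣ => (v : ZMod c) * x = (u : ZMod c))).card)) := by
          rw [Finset.sum_ite, Finset.sum_const, Finset.sum_const_zero, add_zero,
            nsmul_eq_mul, mul_comm ((Finset.univ.filter _).card : ℝ)]
  have hcard := card_units_sol_le (c := c) v ((u : ℤ) : ZMod c)
  have hpow : (c : ℝ) ^ ((3 : ℝ) / 2) = (c : ℝ) * Real.sqrt c := by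
    rw [show ((3 : ℝ) / 2) = (1 : ℝ) + 1 / 2 by norm_num, Real.rpow_add hcR, Real.rpow_one,
      Real.sqrt_eq_rpow]
  calc ‖Sc c d u v γ‖ ≤ Real.sqrt c * ((c : ℝ) *
        ((Finset.univ.filter (fun x : (ZMod c)ˣ => (v : ZMod c) * x = (u : ZMod c))).card)) := key
    _ ≤ Real.sqrt c * ((c : ℝ) * (Int.gcd v (c : ℤ) : ℝ)) := by
        have hcc : ((Finset.univ.filter
            (fun x : (ZMod c)ˣ => (v : ZMod c) * x = (u : ZMod c))).card : ℝ) ≤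
            (Int.gcd v (c : ℤ) : ℝ) := by exact_mod_cast hcard
        exact mul_le_mul_of_nonneg_left
          (mul_le_mul_of_nonneg_left hcc (le_of_lt hcR)) (Real.sqrt_nonneg _)
    _ = (c : ℝ) ^ ((3 : ℝ) / 2) * (Int.gcd v (c : ℤ) : ℝ) := by
        rw [hpow]; ring
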